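/- Let 𝒯 be a set of k rooted phylogenetic trees and let 𝒜 be a cut-subforest of 𝒯. If (𝒜_L, 𝒜_R) is a bipartite of 𝒜 then mcsp(𝒜) ≥ mcsp(𝒜_L) + mcsp(𝒜_R). -/

import Mathlib

set_option linter.unusedSectionVars false
set_option maxHeartbeats 1000000


/-- Rooted, unordered, leaf-labelled trees:
a tree is a single labelled leaf, or an (internal) root node with a list of subtrees
attached to it.  Being unordered, such trees are considered up to the
isomorphism `PTree.Iso` below.  The empty tree is represented by `none` in
`Option (PTree α)`. -/
inductive PTree (α : Type) : Type where
  | leaf : α → PTree α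
  | node : List (PTree α) → PTree α

namespace PTree

variable {α : Type} [DecidableEq α]

theorem sizeOf_lt_of_mem {α : Type} {c : PTree α} {cs : List (PTree α)}
    (h : c ∈ cs) : sizeOf c < sizeOf (PTree.node cs) := by
  have := List.sizeOf_lt_of_mem h
  simp only [node.sizeOf_spec]; omega

/-- `Subtree s t` : `s` is the complete subtree rooted at some node of `t`. -/
inductive Subtree : PTree α → PTree α → Prop where
  | refl (t : PTree α) : Subtree t t
  | child {s c : PTree α} {cs : List (PTree α)} :
      c ∈ cs → Subtree s c → Subtree s (node cs)

/-- The list of leaf labels of a tree. -/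
def labelList : PTree α → List α
  | leaf a => [a]
  | node cs => cs.attach.flatMap (fun c => labelList c.1)
decreasing_by exact sizeOf_lt_of_mem c.2

/-- The set `L(T)` of leaf labels of a tree. -/
def labels (t : PTree α) : Finset α := t.labelList.toFinset

/-- The size of a tree: the number of its leaves. -/
def treeSize (t : PTree α) : ℕ := t.labels.card

/-- The label set of a possibly empty tree. -/
def olabels : Option (PTree α) → Finset α
  | none => ∅
  | some t => t.labels

/-- Connecting a list of trees by a common root.  The empty list yields the
empty tree and a single tree yields that tree itself (no degree-two node is
created). -/
def connect : List (PTree α) → Option (PTree α)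
  | [] => none
  | [t] => some t
  | ts => some (node ts)

/-- The restriction `T|S` of `T` to a label set `S`: all leaves with labels
outside `S` are removed and all internal nodes of degree two are suppressed. -/
def restrict (S : Finset α) : PTree α → Option (PTree α)
  | leaf a => if a ∈ S then some (leaf a) else none
  | node cs => connect ((cs.attach.map (fun c => restrict S c.1)).reduceOption)
decreasing_by exact sizeOf_lt_of_mem c.2

/-- Restriction of a possibly empty tree. -/
def orestrict (S : Finset α) (t : Option (PTree α)) : Option (PTree α) :=
  t.bind (restrict S)

/-- Isomorphism (equality) of unordered leaf-labelled trees: equality of trees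
up to reordering of the children of each node. -/
inductive Iso : PTree α → PTree α → Prop where
  | leaf (a : α) : Iso (leaf a) (leaf a)
  | node {cs ds ds' : List (PTree α)} :
      List.Forall₂ Iso cs ds' → ds'.Perm ds → Iso (node cs) (node ds)

/-- One edge contraction: the edge between a node and one of its (internal)
children is contracted, merging the child into the parent. -/
inductive Contract : PTree α → PTree α → Prop where
  | top (l r ds : List (PTree α)) :
      Contract (node (l ++ node ds :: r)) (node (l ++ ds ++ r))
  | child {c c' : PTree α} (l r : List (PTree α)) :
      Contract c c' → Contract (node (l ++ c :: r)) (node (l ++ c' :: r))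

/-- `T` refines `T'` (written `T ⊵ T'`): `T'` can be obtained (as an
unordered tree) by contracting some edges of `T`. -/
def Refines (t t' : PTree α) : Prop :=
  ∃ u, Relation.ReflTransGen Contract t u ∧ Iso u t'

/-- Refinement of possibly empty trees. -/
def ORefines : Option (PTree α) → Option (PTree α) → Prop
  | none, none => True
  | some a, some b => Refines a b
  | _, _ => False

/-- Isomorphism (equality) of possibly empty unordered trees. -/
def OIso : Option (PTree α) → Option (PTree α) → Prop
  | none, none => True
  | some a, some b => Iso a b
  | _, _ => False

/-- A possibly empty tree is (empty or) a complete subtree of `T`. -/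
def OSubtree (T : PTree α) : Option (PTree α) → Prop
  | none => True
  | some t => Subtree t T

/-- No internal node of degree two (after the usual suppression convention):
every internal node of the rooted tree has at least two children. -/
def NoUnaryNodes (T : PTree α) : Prop :=
  ∀ cs : List (PTree α), Subtree (node cs) T → 2 ≤ cs.length

/-- Every node of the rooted tree has degree at most `D` (the degree of the
root is its number of children; the degree of any other internal node is its
number of children plus one). -/
def DegLE (D : ℕ) (T : PTree α) : Prop :=
  (∀ cs : List (PTree α), T = node cs → cs.length ≤ D) ∧
  (∀ cs : List (PTree α), Subtree (node cs) T → node cs ≠ T → cs.length + 1 ≤ D)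

/-- A rooted tree is binary if every internal node has exactly two children. -/
def Binary (T : PTree α) : Prop :=
  ∀ cs : List (PTree α), Subtree (node cs) T → cs.length = 2

/-- A cut-subtree of `T`: the empty tree, or the tree obtained by selecting
some (at least one) of the subtrees attached to an internal node of `T` and
connecting those subtrees by a common root. -/
def IsCutSubtree (T : PTree α) (a : Option (PTree α)) : Prop :=
  a = none ∨ ∃ cs sel : List (PTree α),
    Subtree (node cs) T ∧ sel.Sublist cs ∧ sel ≠ [] ∧ a = connect sel

variable {k : ℕ}

/-- A cut-subforest of `𝒯`: each component is a cut-subtree of the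
corresponding tree, and at least one component is nonempty. -/
def IsCutSubforest (𝒯 : Fin k → PTree α) (A : Fin k → Option (PTree α)) : Prop :=
  (∀ i, IsCutSubtree (𝒯 i) (A i)) ∧ ∃ i, A i ≠ none

/-- A sub-forest of `𝒯`: each component is the empty tree or a complete
subtree rooted at some node of the corresponding tree, and at least one
component is nonempty. -/
def IsSubForest (𝒯 : Fin k → PTree α) (A : Fin k → Option (PTree α)) : Prop :=
  (∀ i, OSubtree (𝒯 i) (A i)) ∧ ∃ i, A i ≠ none

/-- The set of all labels occurring in the trees of `𝒯`. -/
def allLabels (𝒯 : Fin k → PTree α) : Finset α :=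
  Finset.univ.biUnion fun i => (𝒯 i).labels

/-- A (cut-sub)forest is terminal if each component is the empty tree or a
single leaf of the corresponding tree. -/
def IsTerminal (𝒯 : Fin k → PTree α) (A : Fin k → Option (PTree α)) : Prop :=
  ∀ i, A i = none ∨ ∃ a : α, A i = some (leaf a) ∧ Subtree (leaf a) (𝒯 i)

/-- `Λ(𝒜) = { l ∈ ⋃_j L(𝒜⁽ʲ⁾) ∣ ∀ i, l ∉ L(𝒯⁽ⁱ⁾) − L(𝒜⁽ⁱ⁾) }`. -/
def lambdaSet (𝒯 : Fin k → PTree α) (A : Fin k → Option (PTree α)) : Finset α :=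
  (Finset.univ.biUnion fun j => olabels (A j)).filter
    fun l => ∀ i, l ∉ (𝒯 i).labels \ olabels (A i)

/-- `Y` is a compatible supertree of the forest `A`:
`Y|L(A⁽ⁱ⁾) ⊵ A⁽ⁱ⁾|L(Y)` for every `i`. -/
def IsCompatibleSupertree (A : Fin k → Option (PTree α)) (Y : PTree α) : Prop :=
  ∀ i, ORefines (restrict (olabels (A i)) Y) (orestrict Y.labels (A i))

/-- `X` is an agreement supertree of the forest `A`:
`X|L(A⁽ⁱ⁾) = A⁽ⁱ⁾|L(X)` (as unordered trees) for every `i`. -/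
def IsAgreementSupertree (A : Fin k → Option (PTree α)) (X : PTree α) : Prop :=
  ∀ i, OIso (restrict (olabels (A i)) X) (orestrict X.labels (A i))

/-- An embedded supertree of a cut-subforest `A` of `𝒯`: a distinctly
leaf-labelled compatible supertree `Y` of `A`, with leaves labelled by labels
of `𝒯`, such that `L(Y) ∩ L(𝒯⁽ⁱ⁾) ⊆ L(A⁽ⁱ⁾)` for all `i`. -/
def IsEmbeddedSupertree (𝒯 : Fin k → PTree α) (A : Fin k → Option (PTree α))
    (Y : PTree α) : Prop :=
  Y.labelList.Nodup ∧ Y.labels ⊆ allLabels 𝒯 ∧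
  IsCompatibleSupertree A Y ∧
  ∀ i, Y.labels ∩ (𝒯 i).labels ⊆ olabels (A i)

/-- An enclosed supertree of a sub-forest `A` of `𝒯`: a distinctly
leaf-labelled agreement supertree `X` of `A`, with leaves labelled by labels
of `𝒯`, such that `L(X) ∩ L(𝒯⁽ⁱ⁾) ⊆ L(A⁽ⁱ⁾)` for all `i`. -/
def IsEnclosedSupertree (𝒯 : Fin k → PTree α) (A : Fin k → Option (PTree α))
    (X : PTree α) : Prop :=
  X.labelList.Nodup ∧ X.labels ⊆ allLabels 𝒯 ∧
  IsAgreementSupertree A X ∧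
  ∀ i, X.labels ∩ (𝒯 i).labels ⊆ olabels (A i)

/-- `mcsp 𝒯 A` : the maximum size of an embedded supertree of `A`. -/
noncomputable def mcsp (𝒯 : Fin k → PTree α) (A : Fin k → Option (PTree α)) : ℕ :=
  sSup {m : ℕ | ∃ Y : PTree α, IsEmbeddedSupertree 𝒯 A Y ∧ m = Y.treeSize}

/-- `masp 𝒯 A` : the maximum size of an enclosed supertree of `A`. -/
noncomputable def masp (𝒯 : Fin k → PTree α) (A : Fin k → Option (PTree α)) : ℕ :=
  sSup {m : ℕ | ∃ X : PTree α, IsEnclosedSupertree 𝒯 A X ∧ m = X.treeSize}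

end PTree

/-- `ListSplit s l r` : the list `s` is partitioned into the two
(complementary) sublists `l` and `r`. -/
inductive ListSplit {β : Type} : List β → List β → List β → Prop where
  | nil : ListSplit [] [] []
  | left {s l r : List β} (x : β) : ListSplit s l r → ListSplit (x :: s) (x :: l) r
  | right {s l r : List β} (x : β) : ListSplit s l r → ListSplit (x :: s) l (x :: r)

namespace PTree

variable {α : Type} [DecidableEq α] {k : ℕ}

/-- `(AL, AR)` is a bipartite of the forest `A`: for every `i` the set of
subtrees attached to the root of `A⁽ⁱ⁾` is partitioned into two sets, each of
which is connected by a common root to form `AL⁽ⁱ⁾` resp. `AR⁽ⁱ⁾` (an empty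
set of subtrees yielding the empty tree). -/
def IsBipartite (A AL AR : Fin k → Option (PTree α)) : Prop :=
  ∀ i, ∃ s sL sR : List (PTree α),
    A i = connect s ∧ ListSplit s sL sR ∧ AL i = connect sL ∧ AR i = connect sR

/-- Condition, at one component, for `(b 1, …, b d)` to decompose `a`:
either exactly one `b j` is isomorphic to `a` and the others are empty, or at
least two of the `b j` are nonempty and the nonempty ones are isomorphic to
pairwise distinct subtrees attached to the root of `a`. -/
def DecompAt {d : ℕ} (a : Option (PTree α)) (b : Fin d → Option (PTree α)) : Prop :=
  (∃ j, OIso (b j) a ∧ ∀ j', j' ≠ j → b j' = none) ∨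
  (∃ cs : List (PTree α), a = some (node cs) ∧
    2 ≤ (Finset.univ.filter fun j => (b j).isSome).card ∧
    ∃ idx : Fin d → Option (Fin cs.length),
      (∀ j, b j = none ↔ idx j = none) ∧
      (∀ j t m, b j = some t → idx j = some m → Iso t (cs.get m)) ∧
      (∀ j j' m, idx j = some m → idx j' = some m → j = j'))

/-- `(B 1, …, B d)` is a decomposition of the forest `A` (each `B j` being a
possibly empty sub-forest of `𝒯`). -/
def IsDecomposition (𝒯 : Fin k → PTree α) (A : Fin k → Option (PTree α))
    (d : ℕ) (B : Fin d → Fin k → Option (PTree α)) : Prop :=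
  2 ≤ d ∧ (∀ j i, OSubtree (𝒯 i) (B j i)) ∧ ∀ i, DecompAt (A i) fun j => B j i

/-- The root of the (nonempty) cut-subtree `a` is an internal node of `T`,
i.e. `a` is the complete subtree of `T` rooted at an internal node of `T`. -/
def InternalRooted (T : PTree α) : Option (PTree α) → Prop
  | none => False
  | some t => (∃ cs : List (PTree α), t = node cs) ∧ Subtree t T

/-- One rerooting step: the root is moved to an adjacent internal node. -/
inductive Reroot1 : PTree α → PTree α → Prop where
  | step (l r ds : List (PTree α)) :
      Reroot1 (node (l ++ node ds :: r)) (node (ds ++ [node (l ++ r)]))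

/-- `F` is a rooted variant of the unrooted tree (represented by) `T`:
`F` is obtained by rooting `T` at some internal node. -/
def RootedVariant (T F : PTree α) : Prop := Relation.ReflTransGen Reroot1 T F

/-- A maximal subtree of the unrooted tree (represented by) `T`: a rooted tree
obtained by first rooting `T` at some internal node and then removing at most
one nontrivial subtree attached to that node. -/
def IsMaximalSubtree (T A : PTree α) : Prop :=
  ∃ cs : List (PTree α), RootedVariant T (node cs) ∧
    (A = node cs ∨ ∃ l r ds : List (PTree α), cs = l ++ node ds :: r ∧ A = node (l ++ r))

/-- `T` (a rooted tree, rooted at an internal node) represents an unrooted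
tree without vertices of degree two: the root has at least three neighbours
and every other internal vertex has at least three neighbours as well. -/
def IsUnrootedRep (T : PTree α) : Prop :=
  (∃ cs : List (PTree α), T = node cs ∧ 3 ≤ cs.length) ∧
  ∀ cs : List (PTree α), Subtree (node cs) T → node cs ≠ T → 2 ≤ cs.length

end PTree

namespace PTree

variable {α : Type} [DecidableEq α] {k : ℕ}

-- ===================== aux =====================

theorem labelList_node (cs : List (PTree α)) :
    labelList (node cs) = cs.flatMap labelList := by
  rw [labelList]
  conv_rhs => rw [← List.attach_map_subtype_val cs]
  rw [List.flatMap_map]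

theorem labels_leaf (a : α) : labels (leaf a) = {a} := by
  simp [labels, labelList]

theorem mem_labels_node {x : α} {cs : List (PTree α)} :
    x ∈ labels (node cs) ↔ ∃ c ∈ cs, x ∈ labels c := by
  simp [labels, labelList_node]

theorem restrict_node (S : Finset α) (cs : List (PTree α)) :
    restrict S (node cs) = connect ((cs.map (restrict S)).reduceOption) := by
  rw [restrict]
  congr 2
  conv_rhs => rw [← List.attach_map_subtype_val cs]
  rw [List.map_map]
  rfl

theorem connect_eq_none_iff {l : List (PTree α)} : connect l = none ↔ l = [] := by
  match l with
  | [] => simp [connect]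
  | [t] => simp [connect]
  | a :: b :: r => simp [connect]

theorem connect_two_le {l : List (PTree α)} (h : 2 ≤ l.length) :
    connect l = some (node l) := by
  match l with
  | [] => simp at h
  | [t] => simp at h
  | a :: b :: r => rfl

theorem connect_labelList {l : List (PTree α)} {t : PTree α} (h : connect l = some t) :
    t.labelList = l.flatMap labelList := by
  match l with
  | [] => simp [connect] at h
  | [u] => simp [connect] at h; simp [← h]
  | a :: b :: r =>
    simp only [connect] at h
    injection h with h
    rw [← h, labelList_node]

theorem olabels_connect (l : List (PTree α)) :
    olabels (connect l) = (l.flatMap labelList).toFinset := by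
  cases hc : connect l with
  | none => rw [connect_eq_none_iff] at hc; subst hc; simp [olabels]
  | some t => simp [olabels, labels, connect_labelList hc]

theorem reduceOption_eq_nil_iff {β : Type} {l : List (Option β)} :
    l.reduceOption = [] ↔ ∀ x ∈ l, x = none := by
  induction l with
  | nil => simp
  | cons a t ih =>
    cases a with
    | none => simp [List.reduceOption_cons_of_none, ih]
    | some b => simp [List.reduceOption_cons_of_some]

theorem sublist_flatMap_of_mem {β γ : Type*} {f : β → List γ} {b : β} {l : List β}
    (h : b ∈ l) : (f b).Sublist (l.flatMap f) := by
  induction l with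
  | nil => simp at h
  | cons a t ih =>
    rw [List.flatMap_cons]
    rcases List.mem_cons.mp h with rfl | h
    · exact List.sublist_append_left _ _
    · exact (ih h).trans (List.sublist_append_right _ _)

theorem sublist_flatMap {β γ : Type*} {f : β → List γ} {l l' : List β}
    (h : l.Sublist l') : (l.flatMap f).Sublist (l'.flatMap f) := by
  induction h with
  | slnil => simp
  | cons a _ ih => rw [List.flatMap_cons]; exact ih.trans (List.sublist_append_right _ _)
  | cons_cons a _ ih => rw [List.flatMap_cons, List.flatMap_cons]; exact ih.append_left _

theorem labelList_sublist_of_subtree {s t : PTree α} (h : Subtree s t) :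
    s.labelList.Sublist t.labelList := by
  induction h with
  | refl => exact List.Sublist.refl _
  | child hmem _ ih =>
    refine ih.trans ?_
    rw [labelList_node]
    exact sublist_flatMap_of_mem hmem

theorem labels_subset_of_mem {c : PTree α} {cs : List (PTree α)} (h : c ∈ cs) :
    labels c ⊆ labels (node cs) := fun x hx => mem_labels_node.mpr ⟨c, h, hx⟩

theorem restrict_eq_none_iff : ∀ (t : PTree α) (S : Finset α),
    restrict S t = none ↔ Disjoint S t.labels
  | leaf a, S => by
    rw [restrict, labels_leaf]
    split_ifs with h <;> simp [Finset.disjoint_singleton_right, h]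
  | node cs, S => by
    rw [restrict_node, connect_eq_none_iff, reduceOption_eq_nil_iff]
    constructor
    · intro h
      rw [Finset.disjoint_right]
      intro x hx hxS
      obtain ⟨c, hc, hxc⟩ := mem_labels_node.mp hx
      have := (restrict_eq_none_iff c S).mp (h _ (List.mem_map_of_mem hc))
      exact (Finset.disjoint_right.mp this hxc) hxS
    · intro h y hy
      obtain ⟨c, hc, rfl⟩ := List.mem_map.mp hy
      exact (restrict_eq_none_iff c S).mpr
        (h.mono_right (labels_subset_of_mem hc))
termination_by t => sizeOf t
decreasing_by all_goals exact sizeOf_lt_of_mem (by assumption)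

theorem restrict_congr : ∀ (t : PTree α) (S S' : Finset α),
    S ∩ t.labels = S' ∩ t.labels → restrict S t = restrict S' t
  | leaf a, S, S', h => by
    have ha : a ∈ S ↔ a ∈ S' := by
      have := Finset.ext_iff.mp h a
      simpa [labels_leaf] using this
    rw [restrict, restrict, if_congr ha rfl rfl]
  | node cs, S, S', h => by
    rw [restrict_node, restrict_node]
    congr 2
    refine List.map_congr_left (fun c hc => ?_)
    refine restrict_congr c S S' ?_
    ext x
    simp only [Finset.mem_inter]
    constructor
    · rintro ⟨hxS, hxc⟩
      have := Finset.ext_iff.mp h x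
      simp only [Finset.mem_inter] at this
      exact ⟨(this.mp ⟨hxS, labels_subset_of_mem hc hxc⟩).1, hxc⟩
    · rintro ⟨hxS, hxc⟩
      have := Finset.ext_iff.mp h x
      simp only [Finset.mem_inter] at this
      exact ⟨(this.mpr ⟨hxS, labels_subset_of_mem hc hxc⟩).1, hxc⟩
termination_by t => sizeOf t
decreasing_by exact sizeOf_lt_of_mem (by assumption)

theorem orestrict_connect (W : Finset α) (s : List (PTree α)) :
    orestrict W (connect s) = connect ((s.map (restrict W)).reduceOption) := by
  match s with
  | [] => rfl
  | [t] =>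
    show restrict W t = connect ([restrict W t].reduceOption)
    cases h : restrict W t <;> simp [h, List.reduceOption, connect]
  | a :: b :: r =>
    show restrict W (node (a :: b :: r)) = _
    rw [restrict_node]


-- ===== layer 2 =====

theorem iso_refl : ∀ t : PTree α, Iso t t
  | leaf a => .leaf a
  | node cs => .node (List.forall₂_same.mpr fun c _ => iso_refl c) (List.Perm.refl cs)
termination_by t => sizeOf t
decreasing_by exact sizeOf_lt_of_mem (by assumption)

theorem iso_node_perm {u : PTree α} {Q P : List (PTree α)}
    (h : Iso u (node Q)) (hp : Q.Perm P) : Iso u (node P) := by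
  cases h with
  | node hf hperm => exact .node hf (hperm.trans hp)

theorem orefines_none {b : Option (PTree α)} (h : ORefines none b) : b = none := by
  cases b with
  | none => rfl
  | some t => exact h.elim

theorem orefines_some {y : PTree α} {b : Option (PTree α)} (h : ORefines (some y) b) :
    ∃ z, b = some z ∧ Refines y z := by
  cases b with
  | none => exact h.elim
  | some z => exact ⟨z, rfl, h⟩

theorem rtg_contract_child {c c' : PTree α} (l r : List (PTree α))
    (h : Relation.ReflTransGen Contract c c') :
    Relation.ReflTransGen Contract (node (l ++ c :: r)) (node (l ++ c' :: r)) :=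
  Relation.ReflTransGen.lift (fun x => node (l ++ x :: r))
    (fun _ _ hc => Contract.child l r hc) _ _ h

theorem orefines_connect_perm {u : Option (PTree α)} {Q P : List (PTree α)}
    (h : ORefines u (connect Q)) (hp : Q.Perm P) : ORefines u (connect P) := by
  cases u with
  | none =>
    have : Q = [] := connect_eq_none_iff.mp (orefines_none h)
    subst this
    rw [hp.symm.eq_nil]
    exact h
  | some y =>
    obtain ⟨z, hz, w, hw, hiso⟩ := orefines_some h
    match Q, hz with
    | [q], hz =>
      have hPq : P = [q] := List.perm_singleton.mp hp.symm
      subst hPq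
      exact h
    | a :: b :: r, hz =>
      injection hz with hz
      have h2 : 2 ≤ P.length := by
        rw [← hp.length_eq]; simp
      rw [connect_two_le h2]
      exact ⟨w, hw, iso_node_perm (hz ▸ hiso) hp⟩

/-- one flattening step -/
theorem flatten_step {w z : PTree α} {Q : List (PTree α)} (l r : List (PTree α))
    (hQ : connect Q = some z) (hiso : Iso w z) :
    ∃ es fs : List (PTree α),
      Relation.ReflTransGen Contract (node (l ++ w :: r)) (node (l ++ es ++ r)) ∧
      List.Forall₂ Iso es fs ∧ fs.Perm Q := by
  match Q, hQ with
  | [q], hQ =>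
    injection hQ with hQ
    exact ⟨[w], [q], by simpa using Relation.ReflTransGen.refl,
      List.Forall₂.cons (hQ ▸ hiso) List.Forall₂.nil, .refl _⟩
  | a :: b :: rr, hQ =>
    injection hQ with hQ
    subst hQ
    cases hiso with
    | node hf hperm =>
      rename_i cs ds'
      refine ⟨cs, ds', Relation.ReflTransGen.single ?_, hf, hperm⟩
      exact Contract.top l r cs

theorem combine_refines {uL uR : Option (PTree α)} {PL PR P : List (PTree α)}
    (hL : ORefines uL (connect PL)) (hR : ORefines uR (connect PR))
    (hp : P.Perm (PL ++ PR)) :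
    ORefines (connect (List.reduceOption [uL, uR])) (connect P) := by
  cases uL with
  | none =>
    have hPL : PL = [] := connect_eq_none_iff.mp (orefines_none hL)
    subst hPL
    simp only [List.nil_append] at hp
    cases uR with
    | none =>
      have hPR : PR = [] := connect_eq_none_iff.mp (orefines_none hR)
      subst hPR
      rw [hp.eq_nil]
      show ORefines none none
      exact trivial
    | some y =>
      show ORefines (connect [y]) (connect P)
      exact orefines_connect_perm hR hp.symm
  | some yL =>
    obtain ⟨zL, hzL, wL, hwL, hisoL⟩ := orefines_some hL
    cases uR with
    | none =>
      have hPR : PR = [] := connect_eq_none_iff.mp (orefines_none hR)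
      subst hPR
      simp only [List.append_nil] at hp
      show ORefines (connect [yL]) (connect P)
      exact orefines_connect_perm hL hp.symm
    | some yR =>
      obtain ⟨zR, hzR, wR, hwR, hisoR⟩ := orefines_some hR
      -- contract inside children
      have step1 : Relation.ReflTransGen Contract (node [yL, yR]) (node [wL, wR]) := by
        have h1 := rtg_contract_child ([] : List (PTree α)) [yR] hwL
        have h2 := rtg_contract_child [wL] ([] : List (PTree α)) hwR
        simpa using h1.trans (by simpa using h2)
      obtain ⟨esL, fsL, hstep2, hfL, hpL⟩ := flatten_step ([] : List (PTree α)) [wR] hzL hisoL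
      obtain ⟨esR, fsR, hstep3, hfR, hpR⟩ := flatten_step esL ([] : List (PTree α)) hzR hisoR
      have hPLne : PL ≠ [] := fun hn => by
        subst hn; simp [connect] at hzL
      have hPRne : PR ≠ [] := fun hn => by
        subst hn; simp [connect] at hzR
      have h2 : 2 ≤ P.length := by
        rw [hp.length_eq, List.length_append]
        rcases List.exists_cons_of_ne_nil hPLne with ⟨_, _, rfl⟩
        rcases List.exists_cons_of_ne_nil hPRne with ⟨_, _, rfl⟩
        simp; omega
      show ORefines (connect [yL, yR]) (connect P)
      rw [connect_two_le (by simp), connect_two_le h2]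
      refine ⟨node (esL ++ esR), ?_, ?_⟩
      · refine step1.trans ?_
        have hstep2' : Relation.ReflTransGen Contract (node [wL, wR]) (node (esL ++ [wR])) := by
          simpa using hstep2
        have hstep3' : Relation.ReflTransGen Contract (node (esL ++ [wR])) (node (esL ++ esR)) := by
          simpa using hstep3
        exact hstep2'.trans hstep3'
      · exact .node (List.rel_append hfL hfR) ((hpL.append hpR).trans hp.symm)

theorem _root_.ListSplit.perm {β : Type} {s l r : List β} (h : ListSplit s l r) :
    s.Perm (l ++ r) := by
  induction h with
  | nil => exact .refl _
  | left x _ ih => exact ih.cons x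
  | right x _ ih => exact (ih.cons x).trans List.perm_middle.symm

theorem _root_.ListSplit.symm {β : Type} {s l r : List β} (h : ListSplit s l r) :
    ListSplit s r l := by
  induction h with
  | nil => exact .nil
  | left x _ ih => exact .right x ih
  | right x _ ih => exact .left x ih

theorem _root_.ListSplit.reduceMap {s l r : List (PTree α)} (f : PTree α → Option (PTree α))
    (h : ListSplit s l r) :
    ListSplit ((s.map f).reduceOption) ((l.map f).reduceOption) ((r.map f).reduceOption) := by
  induction h with
  | nil => exact .nil
  | left x _ ih =>
    cases hfx : f x with
    | none =>
      simp only [List.map_cons, hfx, List.reduceOption_cons_of_none]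
      exact ih
    | some y =>
      simp only [List.map_cons, hfx, List.reduceOption_cons_of_some]
      exact .left y ih
  | right x _ ih =>
    cases hfx : f x with
    | none =>
      simp only [List.map_cons, hfx, List.reduceOption_cons_of_none]
      exact ih
    | some y =>
      simp only [List.map_cons, hfx, List.reduceOption_cons_of_some]
      exact .right y ih



-- ===== layer 3 =====

theorem perm_flatMap {β γ : Type} (f : β → List γ) {l l' : List β} (h : l.Perm l') :
    (l.flatMap f).Perm (l'.flatMap f) := by
  induction h with
  | nil => exact .refl _
  | cons x _ ih => simpa only [List.flatMap_cons] using ih.append_left (f x)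
  | swap x y l =>
    simp only [List.flatMap_cons, ← List.append_assoc]
    exact (List.perm_append_comm).append_right _
  | trans _ _ ih1 ih2 => exact ih1.trans ih2

theorem cut_labelList_sublist {T : PTree α} {a : Option (PTree α)} (h : IsCutSubtree T a)
    {t : PTree α} (ht : a = some t) : t.labelList.Sublist T.labelList := by
  rcases h with h | ⟨cs, sel, hsub, hsl, _, hconn⟩
  · rw [h] at ht; exact absurd ht (by simp)
  · rw [hconn] at ht
    rw [connect_labelList ht]
    refine (sublist_flatMap hsl).trans ?_
    rw [← labelList_node]
    exact labelList_sublist_of_subtree hsub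

theorem cut_flat_sublist {T : PTree α} {a : Option (PTree α)} {s : List (PTree α)}
    (hAi : IsCutSubtree T a) (hs : a = connect s) :
    (s.flatMap labelList).Sublist T.labelList := by
  cases hc : connect s with
  | none => rw [connect_eq_none_iff.mp hc]; simp
  | some t => rw [← connect_labelList hc]; exact cut_labelList_sublist hAi (hs.trans hc)

theorem mem_allLabels {𝒯 : Fin k → PTree α} {x : α} :
    x ∈ allLabels 𝒯 ↔ ∃ i, x ∈ (𝒯 i).labels := by simp [allLabels]

/-- Bundle of per-component facts. -/
theorem component_facts {T : PTree α} {a aL aR : Option (PTree α)}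
    {s sL sR : List (PTree α)}
    (hphyloT : T.labelList.Nodup) (hcut : IsCutSubtree T a)
    (hs : a = connect s) (hsplit : ListSplit s sL sR)
    (hL : aL = connect sL) (hR : aR = connect sR) :
    olabels a ⊆ T.labels ∧ olabels aL ⊆ olabels a ∧ olabels aR ⊆ olabels a ∧
    (sL.flatMap labelList).Disjoint (sR.flatMap labelList) ∧
    olabels aL = (sL.flatMap labelList).toFinset ∧
    olabels aR = (sR.flatMap labelList).toFinset := by
  have hflat : (s.flatMap labelList).Sublist T.labelList := cut_flat_sublist hcut hs
  have hperm : s.Perm (sL ++ sR) := hsplit.perm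
  have hpermF : (s.flatMap labelList).Perm (sL.flatMap labelList ++ sR.flatMap labelList) := by
    have := perm_flatMap labelList hperm
    rwa [List.flatMap_append] at this
  have hnd2 := hpermF.nodup (hflat.nodup hphyloT)
  refine ⟨?_, ?_, ?_, (List.nodup_append'.mp hnd2).2.2, ?_, ?_⟩
  · rw [hs, olabels_connect]
    intro x hx
    simp only [labels, List.mem_toFinset] at hx ⊢
    exact hflat.subset hx
  · rw [hL, hs, olabels_connect, olabels_connect]
    intro x hx
    simp only [List.mem_toFinset, List.mem_flatMap] at hx ⊢
    obtain ⟨c, hc, hxc⟩ := hx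
    exact ⟨c, hperm.mem_iff.mpr (List.mem_append_left _ hc), hxc⟩
  · rw [hR, hs, olabels_connect, olabels_connect]
    intro x hx
    simp only [List.mem_toFinset, List.mem_flatMap] at hx ⊢
    obtain ⟨c, hc, hxc⟩ := hx
    exact ⟨c, hperm.mem_iff.mpr (List.mem_append_right _ hc), hxc⟩
  · rw [hL, olabels_connect]
  · rw [hR, olabels_connect]

theorem labels_pair (YL YR : PTree α) :
    labels (node [YL, YR]) = YL.labels ∪ YR.labels := by
  ext x; simp [mem_labels_node]

theorem labelList_pair (YL YR : PTree α) :
    labelList (node [YL, YR]) = YL.labelList ++ YR.labelList := by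
  rw [labelList_node]; simp

/-- A tree embedded w.r.t. the "kept" side of a bipartition is embedded w.r.t. the whole. -/
theorem embedded_superset (𝒯 : Fin k → PTree α) (hphylo : ∀ i, (𝒯 i).labelList.Nodup)
    {A AR : Fin k → Option (PTree α)}
    (hA : ∀ i, IsCutSubtree (𝒯 i) (A i))
    (h : ∀ i, ∃ s sL sR : List (PTree α),
      A i = connect s ∧ ListSplit s sL sR ∧ AR i = connect sR)
    {Y : PTree α} (hY : IsEmbeddedSupertree 𝒯 AR Y) :
    IsEmbeddedSupertree 𝒯 A Y := by
  obtain ⟨hnd, hsub, hcompat, hcap⟩ := hY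
  have facts : ∀ i, olabels (AR i) ⊆ olabels (A i) := by
    intro i
    obtain ⟨s, sL, sR, hs, hsplit, hAR⟩ := h i
    exact (component_facts (hphylo i) (hA i) hs hsplit rfl hAR).2.2.1
  refine ⟨hnd, hsub, ?_, fun i => (hcap i).trans (facts i)⟩
  intro i
  obtain ⟨s, sL, sR, hs, hsplit, hAR⟩ := h i
  obtain ⟨hTA, -, hsubR, hdisj, -, holR⟩ :=
    component_facts (hphylo i) (hA i) hs hsplit rfl hAR
  -- the leaves of Y lying in 𝒯 i all lie in AR i
  have hYT : Y.labels ∩ (𝒯 i).labels ⊆ olabels (AR i) := hcap i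
  -- restricting to A i equals restricting to AR i
  have e1 : restrict (olabels (A i)) Y = restrict (olabels (AR i)) Y := by
    refine restrict_congr _ _ _ ?_
    ext x
    simp only [Finset.mem_inter]
    constructor
    · rintro ⟨hxA, hxY⟩
      exact ⟨hYT (Finset.mem_inter.mpr ⟨hxY, hTA hxA⟩), hxY⟩
    · rintro ⟨hxA, hxY⟩
      exact ⟨hsubR hxA, hxY⟩
  -- children in sL restrict to none
  have hz : ∀ c ∈ sL, restrict Y.labels c = none := by
    intro c hc
    refine (restrict_eq_none_iff c _).mpr ?_
    rw [Finset.disjoint_left]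
    intro x hxY hxc
    have hxc' : x ∈ sL.flatMap labelList := by
      rw [List.mem_flatMap]
      refine ⟨c, hc, ?_⟩
      simpa [labels] using hxc
    have hxT : x ∈ (𝒯 i).labels := by
      have : x ∈ olabels (A i) := by
        rw [hs, olabels_connect]
        refine List.mem_toFinset.mpr ?_
        rw [List.mem_flatMap] at hxc' ⊢
        obtain ⟨c', hc', hx'⟩ := hxc'
        exact ⟨c', hsplit.perm.mem_iff.mpr (List.mem_append_left _ hc'), hx'⟩
      exact hTA this
    have hxR : x ∈ olabels (AR i) := hYT (Finset.mem_inter.mpr ⟨hxY, hxT⟩)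
    rw [holR, List.mem_toFinset] at hxR
    exact hdisj hxc' hxR
  have hsplit2 := hsplit.reduceMap (restrict Y.labels)
  have hnilL : (sL.map (restrict Y.labels)).reduceOption = [] := by
    refine reduceOption_eq_nil_iff.mpr ?_
    intro x hx
    obtain ⟨c, hc, rfl⟩ := List.mem_map.mp hx
    exact hz c hc
  have hP : ((s.map (restrict Y.labels)).reduceOption).Perm
      ((sR.map (restrict Y.labels)).reduceOption) := by
    have := hsplit2.perm
    rw [hnilL] at this
    simpa using this
  have hcR := hcompat i
  have hor : orestrict Y.labels (AR i) = connect ((sR.map (restrict Y.labels)).reduceOption) := by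
    rw [hAR, orestrict_connect]
  rw [hor] at hcR
  have horA : orestrict Y.labels (A i) = connect ((s.map (restrict Y.labels)).reduceOption) := by
    rw [hs, orestrict_connect]
  rw [horA, e1]
  exact orefines_connect_perm hcR hP.symm

/-- Gluing two embedded supertrees of the two sides of a bipartition. -/
theorem embedded_glue (𝒯 : Fin k → PTree α) (hphylo : ∀ i, (𝒯 i).labelList.Nodup)
    {A AL AR : Fin k → Option (PTree α)}
    (hA : ∀ i, IsCutSubtree (𝒯 i) (A i))
    (hbip : IsBipartite A AL AR)
    {YL YR : PTree α}
    (hYL : IsEmbeddedSupertree 𝒯 AL YL) (hYR : IsEmbeddedSupertree 𝒯 AR YR) :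
    IsEmbeddedSupertree 𝒯 A (node [YL, YR]) ∧
    (node [YL, YR]).treeSize = YL.treeSize + YR.treeSize := by
  obtain ⟨hndL, hsubL, hcompatL, hcapL⟩ := hYL
  obtain ⟨hndR, hsubR, hcompatR, hcapR⟩ := hYR
  have hLRdisj : ∀ i, Disjoint (olabels (AL i)) (olabels (AR i)) := by
    intro i
    obtain ⟨s, sL, sR, hs, hsplit, hAL, hAR⟩ := hbip i
    obtain ⟨-, -, -, hdisj, holL, holR⟩ :=
      component_facts (hphylo i) (hA i) hs hsplit hAL hAR
    rw [holL, holR, List.disjoint_toFinset_iff_disjoint]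
    exact hdisj
  have hYdisj : Disjoint YL.labels YR.labels := by
    rw [Finset.disjoint_left]
    intro x hxL hxR
    obtain ⟨i, hi⟩ := mem_allLabels.mp (hsubL hxL)
    have h1 : x ∈ olabels (AL i) := hcapL i (Finset.mem_inter.mpr ⟨hxL, hi⟩)
    have h2 : x ∈ olabels (AR i) := hcapR i (Finset.mem_inter.mpr ⟨hxR, hi⟩)
    exact Finset.disjoint_left.mp (hLRdisj i) h1 h2
  constructor
  · refine ⟨?_, ?_, ?_, ?_⟩
    · rw [labelList_pair]
      exact hndL.append hndR (List.disjoint_toFinset_iff_disjoint.mp hYdisj)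
    · rw [labels_pair]; exact Finset.union_subset hsubL hsubR
    · -- compatibility
      intro i
      obtain ⟨s, sL, sR, hs, hsplit, hAL, hAR⟩ := hbip i
      obtain ⟨hTA, hsAL, hsAR, hdisj, holL, holR⟩ :=
        component_facts (hphylo i) (hA i) hs hsplit hAL hAR
      have hYlab : (node [YL, YR]).labels = YL.labels ∪ YR.labels := labels_pair YL YR
      -- per-child congruence on the left part
      have hmemT : ∀ c, c ∈ s → labels c ⊆ (𝒯 i).labels := by
        intro c hc x hxc
        refine hTA ?_
        rw [hs, olabels_connect, List.mem_toFinset, List.mem_flatMap]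
        exact ⟨c, hc, List.mem_toFinset.mp hxc⟩
      have hcongrL : ∀ c ∈ sL, restrict (node [YL, YR]).labels c = restrict YL.labels c := by
        intro c hc
        refine restrict_congr _ _ _ ?_
        ext x
        simp only [Finset.mem_inter, hYlab, Finset.mem_union]
        constructor
        · rintro ⟨hxY | hxY, hxc⟩
          · exact ⟨hxY, hxc⟩
          · exfalso
            have hxT : x ∈ (𝒯 i).labels :=
              hmemT c (hsplit.perm.mem_iff.mpr (List.mem_append_left _ hc)) hxc
            have hxR : x ∈ olabels (AR i) := hcapR i (Finset.mem_inter.mpr ⟨hxY, hxT⟩)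
            rw [holR, List.mem_toFinset] at hxR
            refine hdisj ?_ hxR
            rw [List.mem_flatMap]
            exact ⟨c, hc, List.mem_toFinset.mp hxc⟩
        · rintro ⟨hxY, hxc⟩
          exact ⟨Or.inl hxY, hxc⟩
      have hcongrR : ∀ c ∈ sR, restrict (node [YL, YR]).labels c = restrict YR.labels c := by
        intro c hc
        refine restrict_congr _ _ _ ?_
        ext x
        simp only [Finset.mem_inter, hYlab, Finset.mem_union]
        constructor
        · rintro ⟨hxY | hxY, hxc⟩
          · exfalso
            have hxT : x ∈ (𝒯 i).labels :=
              hmemT c (hsplit.perm.mem_iff.mpr (List.mem_append_right _ hc)) hxc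
            have hxL' : x ∈ olabels (AL i) := hcapL i (Finset.mem_inter.mpr ⟨hxY, hxT⟩)
            rw [holL, List.mem_toFinset] at hxL'
            refine hdisj hxL' ?_
            rw [List.mem_flatMap]
            exact ⟨c, hc, List.mem_toFinset.mp hxc⟩
          · exact ⟨hxY, hxc⟩
        · rintro ⟨hxY, hxc⟩
          exact ⟨Or.inr hxY, hxc⟩
      -- rewriting both restrictions of the parts
      have eL : restrict (olabels (A i)) YL = restrict (olabels (AL i)) YL := by
        refine restrict_congr _ _ _ ?_
        ext x
        simp only [Finset.mem_inter]
        constructor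
        · rintro ⟨hxA, hxY⟩
          exact ⟨hcapL i (Finset.mem_inter.mpr ⟨hxY, hTA hxA⟩), hxY⟩
        · rintro ⟨hxA, hxY⟩
          exact ⟨hsAL hxA, hxY⟩
      have eR : restrict (olabels (A i)) YR = restrict (olabels (AR i)) YR := by
        refine restrict_congr _ _ _ ?_
        ext x
        simp only [Finset.mem_inter]
        constructor
        · rintro ⟨hxA, hxY⟩
          exact ⟨hcapR i (Finset.mem_inter.mpr ⟨hxY, hTA hxA⟩), hxY⟩
        · rintro ⟨hxA, hxY⟩
          exact ⟨hsAR hxA, hxY⟩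
      have hcL := hcompatL i
      have horL : orestrict YL.labels (AL i) =
          connect ((sL.map (restrict YL.labels)).reduceOption) := by
        rw [hAL, orestrict_connect]
      rw [horL] at hcL
      have hcR := hcompatR i
      have horR : orestrict YR.labels (AR i) =
          connect ((sR.map (restrict YR.labels)).reduceOption) := by
        rw [hAR, orestrict_connect]
      rw [horR] at hcR
      have hmapL : sL.map (restrict (node [YL, YR]).labels) = sL.map (restrict YL.labels) :=
        List.map_congr_left hcongrL
      have hmapR : sR.map (restrict (node [YL, YR]).labels) = sR.map (restrict YR.labels) :=
        List.map_congr_left hcongrR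
      have hsplit2 := hsplit.reduceMap (restrict (node [YL, YR]).labels)
      rw [hmapL, hmapR] at hsplit2
      have hPperm := hsplit2.perm
      have horA : orestrict (node [YL, YR]).labels (A i) =
          connect ((s.map (restrict (node [YL, YR]).labels)).reduceOption) := by
        rw [hs, orestrict_connect]
      rw [horA, restrict_node]
      simp only [List.map_cons, List.map_nil]
      rw [eL, eR]
      exact combine_refines hcL hcR hPperm
    · intro i
      obtain ⟨s, sL, sR, hs, hsplit, hAL, hAR⟩ := hbip i
      obtain ⟨-, hsAL, hsAR, -, -, -⟩ :=
        component_facts (hphylo i) (hA i) hs hsplit hAL hAR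
      rw [labels_pair]
      intro x hx
      rw [Finset.mem_inter, Finset.mem_union] at hx
      rcases hx with ⟨hxY | hxY, hxT⟩
      · exact hsAL (hcapL i (Finset.mem_inter.mpr ⟨hxY, hxT⟩))
      · exact hsAR (hcapR i (Finset.mem_inter.mpr ⟨hxY, hxT⟩))
  · rw [treeSize, labels_pair, Finset.card_union_of_disjoint hYdisj]
    rfl

end PTree

/-- If `(𝒜_L, 𝒜_R)` is a bipartite of a cut-subforest `𝒜` of
`𝒯` then `mcsp(𝒜) ≥ mcsp(𝒜_L) + mcsp(𝒜_R)`. -/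
theorem maximum_agreement_supertree_stmt3
    {α : Type} [DecidableEq α] {k : ℕ} (𝒯 : Fin k → PTree α)
    (hphylo : ∀ i, (𝒯 i).labelList.Nodup)
    (A AL AR : Fin k → Option (PTree α))
    (hA : PTree.IsCutSubforest 𝒯 A)
    (hbip : PTree.IsBipartite A AL AR) :
    PTree.mcsp 𝒯 AL + PTree.mcsp 𝒯 AR ≤ PTree.mcsp 𝒯 A := by
  classical
  have hbdd : ∀ B : Fin k → Option (PTree α),
      BddAbove {m : ℕ | ∃ Y : PTree α, PTree.IsEmbeddedSupertree 𝒯 B Y ∧ m = Y.treeSize} := by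
    intro B
    refine ⟨(PTree.allLabels 𝒯).card, ?_⟩
    rintro m ⟨Y, hY, rfl⟩
    exact Finset.card_le_card hY.2.1
  have hmcsp : ∀ B : Fin k → Option (PTree α), PTree.mcsp 𝒯 B =
      sSup {m : ℕ | ∃ Y : PTree α, PTree.IsEmbeddedSupertree 𝒯 B Y ∧ m = Y.treeSize} :=
    fun B => rfl
  by_cases hL : {m : ℕ | ∃ Y : PTree α, PTree.IsEmbeddedSupertree 𝒯 AL Y ∧ m = Y.treeSize}.Nonempty
  · by_cases hR : {m : ℕ | ∃ Y : PTree α,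
        PTree.IsEmbeddedSupertree 𝒯 AR Y ∧ m = Y.treeSize}.Nonempty
    · -- both sides admit an embedded supertree: glue
      obtain ⟨YL, hYL, hYLs⟩ := Nat.sSup_mem hL (hbdd AL)
      obtain ⟨YR, hYR, hYRs⟩ := Nat.sSup_mem hR (hbdd AR)
      obtain ⟨hglue, hsize⟩ := PTree.embedded_glue 𝒯 hphylo hA.1 hbip hYL hYR
      rw [hmcsp AL, hmcsp AR, ← hYLs, ← hYRs] at *
      rw [hmcsp A]
      refine le_csSup (hbdd A) ?_
      exact ⟨PTree.node [YL, YR], hglue, by rw [hsize, hYLs, hYRs]⟩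
    · -- right side has no embedded supertree
      rw [hmcsp AR, Set.not_nonempty_iff_eq_empty.mp hR, csSup_empty]
      simp only [Nat.bot_eq_zero, add_zero]
      rw [hmcsp AL, hmcsp A]
      refine csSup_le_csSup (hbdd A) hL ?_
      rintro m ⟨Y, hY, rfl⟩
      refine ⟨Y, ?_, rfl⟩
      refine PTree.embedded_superset 𝒯 hphylo hA.1 (fun i => ?_) hY
      obtain ⟨s, sL, sR, hs, hsplit, hAL, hAR⟩ := hbip i
      exact ⟨s, sR, sL, hs, hsplit.symm, hAL⟩
  · -- left side has no embedded supertree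
    rw [hmcsp AL, Set.not_nonempty_iff_eq_empty.mp hL, csSup_empty]
    simp only [Nat.bot_eq_zero, zero_add]
    by_cases hR : {m : ℕ | ∃ Y : PTree α,
        PTree.IsEmbeddedSupertree 𝒯 AR Y ∧ m = Y.treeSize}.Nonempty
    · rw [hmcsp AR, hmcsp A]
      refine csSup_le_csSup (hbdd A) hR ?_
      rintro m ⟨Y, hY, rfl⟩
      refine ⟨Y, ?_, rfl⟩
      refine PTree.embedded_superset 𝒯 hphylo hA.1 (fun i => ?_) hY
      obtain ⟨s, sL, sR, hs, hsplit, hAL, hAR⟩ := hbip i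
      exact ⟨s, sL, sR, hs, hsplit, hAR⟩
    · rw [hmcsp AR, Set.not_nonempty_iff_eq_empty.mp hR, csSup_empty]
      simp
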